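/- Let A : [0,T) → gl_n(ℝ) solve A' = -tr(S(A)²)·A + (1/2)[A,[A,Aᵗ]] - (1/2)tr(A)·[A,Aᵗ] on its maximal interval of existence [0,T). Then T = ∞, i.e. the solution exists for all t ≥ 0. -/

import Mathlib

open Matrix Filter

noncomputable section

abbrev Mat (n : ℕ) := Matrix (Fin n) (Fin n) ℝ

/-- Commutator bracket of matrices. -/
def bkt {n : ℕ} (X Y : Mat n) : Mat n := X * Y - Y * X

/-- Frobenius inner product ⟨X,Y⟩ = tr(XYᵗ). -/
def frob {n : ℕ} (X Y : Mat n) : ℝ := Matrix.trace (X * Yᵀ)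

/-- Squared Frobenius norm ‖X‖² = tr(XXᵗ). -/
def sqnorm {n : ℕ} (X : Mat n) : ℝ := frob X X

/-- Symmetric part S(X) = (X+Xᵗ)/2. -/
def symPart {n : ℕ} (X : Mat n) : Mat n := (1/2 : ℝ) • (X + Xᵀ)

/-- Right-hand side of the bracket flow ODE. -/
def rhs {n : ℕ} (A : Mat n) : Mat n :=
  (-(Matrix.trace (symPart A * symPart A))) • A
    + (1/2 : ℝ) • bkt A (bkt A Aᵀ)
    - ((1/2 : ℝ) * Matrix.trace A) • bkt A Aᵀ

open scoped NNReal

variable {n : ℕ}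

lemma frob_eq_sum (X Y : Mat n) : frob X Y = ∑ i, ∑ j, X i j * Y i j := by
  simp [frob, Matrix.trace, Matrix.mul_apply, Matrix.diag]

lemma sqnorm_eq_sum (X : Mat n) : sqnorm X = ∑ i, ∑ j, X i j * X i j := by
  simp [sqnorm, frob_eq_sum]

lemma sqnorm_nonneg (X : Mat n) : 0 ≤ sqnorm X := by
  rw [sqnorm_eq_sum]
  exact Finset.sum_nonneg fun i _ => Finset.sum_nonneg fun j _ => mul_self_nonneg _

lemma symPart_symm (X : Mat n) : (symPart X)ᵀ = symPart X := by
  simp [symPart, Matrix.transpose_add, add_comm]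

lemma trace_symPart_sq (X : Mat n) :
    Matrix.trace (symPart X * symPart X) = sqnorm (symPart X) := by
  conv_lhs => rw [← symPart_symm X]
  simp [sqnorm, frob, symPart_symm]

lemma bkt_transpose_self (X : Mat n) : (bkt X Xᵀ)ᵀ = bkt X Xᵀ := by
  simp [bkt, Matrix.transpose_sub, Matrix.transpose_mul]

lemma frob_smul_right (X Y : Mat n) (c : ℝ) : frob X (c • Y) = c * frob X Y := by
  simp [frob_eq_sum, Finset.mul_sum, mul_left_comm]

lemma frob_add_right (X Y Z : Mat n) : frob X (Y + Z) = frob X Y + frob X Z := by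
  simp [frob_eq_sum, mul_add, Finset.sum_add_distrib]

lemma frob_sub_right (X Y Z : Mat n) : frob X (Y - Z) = frob X Y - frob X Z := by
  simp [frob_eq_sum, mul_sub, Finset.sum_sub_distrib]

lemma frob_bkt_self (X : Mat n) : frob X (bkt X Xᵀ) = 0 := by
  rw [frob, bkt_transpose_self, bkt, Matrix.mul_sub, trace_sub, ← Matrix.mul_assoc,
    ← Matrix.mul_assoc, Matrix.trace_mul_cycle X X Xᵀ, Matrix.trace_mul_cycle Xᵀ X X, sub_self]

lemma frob_bkt_bkt (X : Mat n) : frob X (bkt X (bkt X Xᵀ)) = - sqnorm (bkt X Xᵀ) := by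
  set M := bkt X Xᵀ with hM
  have hMt : Mᵀ = M := bkt_transpose_self X
  rw [frob, show (bkt X M)ᵀ = Mᵀ * Xᵀ - Xᵀ * Mᵀ by simp [bkt, Matrix.transpose_sub,
    Matrix.transpose_mul], hMt]
  have h1 : Matrix.trace (X * (M * Xᵀ)) = Matrix.trace (M * (Xᵀ * X)) := by
    rw [Matrix.trace_mul_comm X (M * Xᵀ), Matrix.mul_assoc]
  have h2 : Matrix.trace (X * (Xᵀ * M)) = Matrix.trace (M * (X * Xᵀ)) := by
    rw [← Matrix.mul_assoc, Matrix.trace_mul_comm (X * Xᵀ) M]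
  have hsq : sqnorm M = Matrix.trace (M * (X * Xᵀ)) - Matrix.trace (M * (Xᵀ * X)) := by
    rw [sqnorm, frob, hMt, hM]
    rw [show M * bkt X Xᵀ = M * (X * Xᵀ) - M * (Xᵀ * X) by
      simp only [bkt, Matrix.mul_sub, Matrix.mul_assoc]]
    rw [trace_sub]
  rw [Matrix.mul_sub, trace_sub, h1, h2, hsq]
  ring

lemma sqnorm_def (X : Mat n) : sqnorm X = frob X X := rfl

lemma frob_rhs (X : Mat n) :
    frob X (rhs X) = -(sqnorm (symPart X) * sqnorm X) - (1/2) * sqnorm (bkt X Xᵀ) := by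
  rw [rhs, frob_sub_right, frob_add_right, frob_smul_right, frob_smul_right, frob_smul_right,
    frob_bkt_self, frob_bkt_bkt, trace_symPart_sq, ← sqnorm_def]
  ring

lemma frob_rhs_nonpos (X : Mat n) : frob X (rhs X) ≤ 0 := by
  rw [frob_rhs]
  have h1 := sqnorm_nonneg (symPart X)
  have h2 := sqnorm_nonneg X
  have h3 := sqnorm_nonneg (bkt X Xᵀ)
  nlinarith

lemma rhs_smul (c : ℝ) (X : Mat n) : rhs (c • X) = (c^3) • rhs X := by
  have hsym : symPart (c • X) = c • symPart X := by
    rw [symPart, Matrix.transpose_smul, ← smul_add, smul_comm, symPart]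
  have hbkt : ∀ (d e : ℝ) (Y Z : Mat n), bkt (d • Y) (e • Z) = (d * e) • bkt Y Z := by
    intro d e Y Z
    simp only [bkt, Matrix.smul_mul, Matrix.mul_smul, smul_smul, mul_comm, ← smul_sub]
  have htr : Matrix.trace ((c • symPart X) * (c • symPart X))
      = c^2 * Matrix.trace (symPart X * symPart X) := by
    simp [Matrix.smul_mul, Matrix.mul_smul, smul_smul, pow_two]
  rw [rhs, hsym, Matrix.transpose_smul, htr, hbkt c c X Xᵀ,
    show bkt (c • X) ((c * c) • bkt X Xᵀ) = (c * (c * c)) • bkt X (bkt X Xᵀ) from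
      hbkt c (c*c) X (bkt X Xᵀ),
    trace_smul, rhs, smul_sub, smul_add]
  congr 1
  · congr 1
    · rw [smul_smul, smul_smul]; congr 1; ring
    · rw [smul_smul, smul_smul]; congr 1; ring
  · rw [smul_smul, smul_smul, smul_eq_mul]; congr 1; ring

abbrev EE (n : ℕ) := Fin n → Fin n → ℝ

variable {n : ℕ}

/-- entrywise ContDiff predicate for Mat-valued maps. -/
def CD (f : EE n → Mat n) : Prop := ∀ i j, ContDiff ℝ 1 fun x => f x i j

lemma cd_of : CD (fun x : EE n => Matrix.of x) := by
  intro i j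
  exact (ContinuousLinearMap.proj (R := ℝ) (φ := fun _ : Fin n => ℝ) j).contDiff.comp
    (ContinuousLinearMap.proj (R := ℝ) (φ := fun _ : Fin n => Fin n → ℝ) i).contDiff

lemma CD.transpose {f : EE n → Mat n} (hf : CD f) : CD (fun x => (f x)ᵀ) :=
  fun i j => hf j i

lemma CD.mul {f g : EE n → Mat n} (hf : CD f) (hg : CD g) : CD (fun x => f x * g x) := by
  intro i j
  simp only [Matrix.mul_apply]
  exact ContDiff.sum fun k _ => (hf i k).mul (hg k j)

lemma CD.add {f g : EE n → Mat n} (hf : CD f) (hg : CD g) : CD (fun x => f x + g x) :=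
  fun i j => (hf i j).add (hg i j)

lemma CD.sub {f g : EE n → Mat n} (hf : CD f) (hg : CD g) : CD (fun x => f x - g x) :=
  fun i j => (hf i j).sub (hg i j)

lemma CD.smul {c : EE n → ℝ} {f : EE n → Mat n} (hc : ContDiff ℝ 1 c) (hf : CD f) :
    CD (fun x => c x • f x) :=
  fun i j => hc.mul (hf i j)

lemma CD.trace {f : EE n → Mat n} (hf : CD f) : ContDiff ℝ 1 fun x => Matrix.trace (f x) := by
  simp only [Matrix.trace, Matrix.diag]
  exact ContDiff.sum fun k _ => hf k k

lemma CD.bkt {f g : EE n → Mat n} (hf : CD f) (hg : CD g) : CD (fun x => bkt (f x) (g x)) :=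
  (hf.mul hg).sub (hg.mul hf)

lemma cd_rhs : CD (fun x : EE n => rhs (Matrix.of x)) := by
  have h0 : CD (fun x : EE n => Matrix.of x) := cd_of
  have hsym : CD (fun x : EE n => symPart (Matrix.of x)) := by
    unfold symPart
    exact CD.smul contDiff_const (h0.add h0.transpose)
  unfold rhs
  refine CD.sub (CD.add ?_ ?_) ?_
  · exact CD.smul ((hsym.mul hsym).trace.neg) h0
  · exact CD.smul contDiff_const (h0.bkt (h0.bkt h0.transpose))
  · exact CD.smul (contDiff_const.mul h0.trace) (h0.bkt h0.transpose)

/-- the vector field as a self-map of the pi-type. -/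
lemma contDiff_rhsE : ContDiff ℝ 1 fun x : EE n => Matrix.of.symm (rhs (Matrix.of x)) := by
  rw [contDiff_pi]
  intro i
  rw [contDiff_pi]
  intro j
  exact cd_rhs i j

def retr (R : ℝ) (x : EE n) : EE n := (R / max R ‖x‖) • x

lemma norm_retr_le {R : ℝ} (hR : 0 < R) (x : EE n) : ‖retr R x‖ ≤ R := by
  rw [retr, norm_smul, Real.norm_eq_abs]
  have ha : 0 < max R ‖x‖ := lt_max_of_lt_left hR
  rw [abs_of_pos (div_pos hR ha)]
  calc R / max R ‖x‖ * ‖x‖ ≤ R / max R ‖x‖ * max R ‖x‖ := by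
        have h := le_max_right R ‖x‖
        have h2 : 0 ≤ R / max R ‖x‖ := (div_pos hR ha).le
        exact mul_le_mul_of_nonneg_left h h2
    _ = R := div_mul_cancel₀ _ ha.ne'

lemma retr_eq_self {R : ℝ} (hR : 0 < R) {x : EE n} (h : ‖x‖ ≤ R) : retr R x = x := by
  rw [retr, max_eq_left h, div_self hR.ne', one_smul]

lemma lipschitz_retr {R : ℝ} (hR : 0 < R) : LipschitzWith 2 (retr (n := n) R) := by
  apply LipschitzWith.of_dist_le_mul
  intro x y
  rw [dist_eq_norm, dist_eq_norm]
  set a := max R ‖x‖ with ha'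
  set b := max R ‖y‖ with hb'
  have ha : 0 < a := lt_max_of_lt_left hR
  have hb : 0 < b := lt_max_of_lt_left hR
  have hid : retr R x - retr R y = (R/a) • (x - y) + ((R/a) - (R/b)) • y := by
    rw [retr, retr, smul_sub, sub_smul]
    abel
  rw [hid]
  have h1 : ‖(R/a) • (x - y)‖ ≤ ‖x - y‖ := by
    rw [norm_smul, Real.norm_eq_abs, abs_of_pos (div_pos hR ha)]
    nth_rewrite 2 [← one_mul ‖x - y‖]
    gcongr
    exact div_le_one_of_le₀ (le_max_left _ _) ha.le
  have hab : |a - b| ≤ ‖x - y‖ := by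
    calc |a - b| ≤ |‖x‖ - ‖y‖| := by
          rw [ha', hb', max_comm R ‖x‖, max_comm R ‖y‖]
          exact abs_max_sub_max_le_abs _ _ _
      _ ≤ ‖x - y‖ := abs_norm_sub_norm_le x y
  have h2 : ‖((R/a) - (R/b)) • y‖ ≤ ‖x - y‖ := by
    rw [norm_smul, Real.norm_eq_abs]
    have he : R/a - R/b = R * (b - a) / (a * b) := by
      field_simp
    rw [he, abs_div, abs_mul, abs_of_pos hR, abs_of_pos (mul_pos ha hb)]
    have hyb : ‖y‖ ≤ b := le_max_right _ _
    calc R * |b - a| / (a*b) * ‖y‖ ≤ R * |b - a| / (a*b) * b := by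
          exact mul_le_mul_of_nonneg_left hyb (by positivity)
      _ = (R/a) * |b - a| := by field_simp
      _ ≤ 1 * |b - a| := by
          gcongr
          exact div_le_one_of_le₀ (le_max_left _ _) ha.le
      _ = |a - b| := by rw [one_mul, abs_sub_comm]
      _ ≤ ‖x - y‖ := hab
  calc ‖(R/a) • (x - y) + ((R/a) - (R/b)) • y‖
      ≤ ‖(R/a) • (x - y)‖ + ‖((R/a) - (R/b)) • y‖ := norm_add_le _ _
    _ ≤ ‖x - y‖ + ‖x - y‖ := add_le_add h1 h2
    _ = (2 : ℝ≥0) * ‖x - y‖ := by push_cast; ring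

def Gv (R : ℝ) (x : EE n) : EE n := Matrix.of.symm (rhs (Matrix.of (retr R x)))

lemma exists_lip (R : ℝ) (hR : 0 < R) : ∃ K : ℝ≥0, LipschitzWith K (Gv (n := n) R) := by
  have hcd : ContDiff ℝ 1 (fun x : EE n => Matrix.of.symm (rhs (Matrix.of x))) := contDiff_rhsE
  obtain ⟨M, hM⟩ := (isCompact_closedBall (0 : EE n) R).exists_bound_of_continuousOn
    ((hcd.continuous_fderiv one_ne_zero).norm.continuousOn)
  set K : ℝ≥0 := M.toNNReal with hKdef
  have hlip : LipschitzOnWith K (fun x : EE n => Matrix.of.symm (rhs (Matrix.of x)))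
      (Metric.closedBall 0 R) := by
    apply Convex.lipschitzOnWith_of_nnnorm_fderiv_le
      (fun x _ => (hcd.differentiable one_ne_zero).differentiableAt)
      (fun x hx => ?_) (convex_closedBall 0 R)
    have h := hM x hx
    rw [norm_norm] at h
    rw [← norm_toNNReal]
    exact Real.toNNReal_mono h
  refine ⟨K * 2, LipschitzWith.of_dist_le_mul fun x y => ?_⟩
  have hx : retr R x ∈ Metric.closedBall (0 : EE n) R :=
    mem_closedBall_zero_iff.mpr (norm_retr_le hR x)
  have hy : retr R y ∈ Metric.closedBall (0 : EE n) R :=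
    mem_closedBall_zero_iff.mpr (norm_retr_le hR y)
  calc dist (Gv R x) (Gv R y) ≤ K * dist (retr R x) (retr R y) :=
        hlip.dist_le_mul _ hx _ hy
    _ ≤ K * (2 * dist x y) := by
        gcongr
        exact (lipschitz_retr hR).dist_le_mul x y
    _ = (K * 2 : ℝ≥0) * dist x y := by push_cast; ring

lemma exists_bound (R : ℝ) (hR : 0 < R) : ∃ C : ℝ, 0 ≤ C ∧ ∀ x : EE n, ‖Gv R x‖ ≤ C := by
  have hcd : ContDiff ℝ 1 (fun x : EE n => Matrix.of.symm (rhs (Matrix.of x))) := contDiff_rhsE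
  obtain ⟨C0, hC0⟩ := (isCompact_closedBall (0 : EE n) R).exists_bound_of_continuousOn
    hcd.continuous.continuousOn
  refine ⟨max C0 0, le_max_right _ _, fun x => ?_⟩
  exact le_trans (hC0 _ (mem_closedBall_zero_iff.mpr (norm_retr_le hR x))) (le_max_left _ _)

lemma exists_sol (R : ℝ) (hR : 0 < R) (A₀v : EE n) {K : ℝ≥0} (hK : LipschitzWith K (Gv (n := n) R))
    {C : ℝ} (hC0 : 0 ≤ C) (hC : ∀ x : EE n, ‖Gv R x‖ ≤ C) (k : ℕ) :
    ∃ f : ℝ → EE n, f 0 = A₀v ∧ ∀ t ∈ Set.Icc (-(k+1 : ℝ)) (k+1),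
      HasDerivWithinAt f (Gv R (f t)) (Set.Icc (-(k+1 : ℝ)) (k+1)) t := by
  have hk1 : (0:ℝ) < k + 1 := by positivity
  have hpl : IsPicardLindelof (fun _ : ℝ => Gv (n := n) R) (tmin := -(k+1 : ℝ)) (tmax := k+1)
      ⟨0, by constructor <;> linarith⟩ A₀v (⟨C, hC0⟩ * ((k : ℝ≥0) + 1)) 0 ⟨C, hC0⟩ K :=
    IsPicardLindelof.of_time_independent (fun x _ => hC x) hK.lipschitzOnWith (by
      simp only [NNReal.coe_mul, NNReal.coe_mk, NNReal.coe_add, NNReal.coe_natCast,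
        NNReal.coe_one, NNReal.coe_zero, sub_zero, zero_sub, neg_neg, max_self]
      exact le_refl _)
  exact IsPicardLindelof.exists_eq_forall_mem_Icc_hasDerivWithinAt₀ hpl

/-- key sign property of the modified field -/
lemma frob_Gv_nonpos {R : ℝ} (hR : 0 < R) (x : EE n) :
    frob (Matrix.of x) (Matrix.of (Gv R x)) ≤ 0 := by
  have hc : (0:ℝ) ≤ R / max R ‖x‖ := div_nonneg hR.le (le_trans hR.le (le_max_left _ _))
  have h1 : Matrix.of (Gv R x) = rhs (Matrix.of (retr R x)) := by
    simp [Gv]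
  have h2 : Matrix.of (retr R x) = (R / max R ‖x‖) • Matrix.of x := rfl
  rw [h1, h2, rhs_smul, frob_smul_right]
  exact mul_nonpos_of_nonneg_of_nonpos (by positivity) (frob_rhs_nonpos _)

theorem stmt8 {n : ℕ} (A₀ : Mat n) :
    ∃ A : ℝ → Mat n, A 0 = A₀ ∧
      ∀ t : ℝ, 0 ≤ t → ∀ i j, HasDerivAt (fun s => A s i j) (rhs (A t) i j) t := by
  classical
  set R : ℝ := Real.sqrt (sqnorm A₀) + 1 with hRdef
  have hR : 0 < R := by
    have := Real.sqrt_nonneg (sqnorm A₀)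
    rw [hRdef]; linarith
  set A₀v : EE n := Matrix.of.symm A₀ with hA₀v
  obtain ⟨K, hK⟩ := exists_lip (n := n) R hR
  obtain ⟨C, hC0, hC⟩ := exists_bound (n := n) R hR
  choose f hf0 hfd using exists_sol (n := n) R hR A₀v hK hC0 hC
  -- interior derivatives
  have hfd' : ∀ (k : ℕ), ∀ t ∈ Set.Ioo (-(k+1 : ℝ)) (k+1), HasDerivAt (f k) (Gv R (f k t)) t :=
    fun k t ht => (hfd k t (Set.Ioo_subset_Icc_self ht)).hasDerivAt (Icc_mem_nhds ht.1 ht.2)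
  -- gluing via uniqueness
  have heqkm : ∀ k m : ℕ, k ≤ m → Set.EqOn (f k) (f m) (Set.Icc (-(k+1 : ℝ)) (k+1)) := by
    intro k m hkm
    have hc : (k:ℝ) ≤ m := by exact_mod_cast hkm
    have hsub : Set.Ioo (-(k+1 : ℝ)) (k+1) ⊆ Set.Ioo (-(m+1 : ℝ)) (m+1) :=
      Set.Ioo_subset_Ioo (by linarith) (by linarith)
    have hsubI : Set.Icc (-(k+1 : ℝ)) (k+1) ⊆ Set.Icc (-(m+1 : ℝ)) (m+1) :=
      Set.Icc_subset_Icc (by linarith) (by linarith)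
    apply ODE_solution_unique_of_mem_Icc (v := fun _ => Gv R) (s := fun _ => Set.univ)
      (fun _ _ => hK.lipschitzOnWith)
      (show (0:ℝ) ∈ Set.Ioo (-(k+1 : ℝ)) (k+1) by constructor <;> [linarith [k.cast_nonneg (α := ℝ)]; linarith [k.cast_nonneg (α := ℝ)]])
      (fun t ht => (hfd k t ht).continuousWithinAt)
      (fun t ht => hfd' k t ht)
      (fun _ _ => Set.mem_univ _)
      (fun t ht => ((hfd m t (hsubI ht)).continuousWithinAt).mono hsubI)
      (fun t ht => hfd' m t (hsub ht))
      (fun _ _ => Set.mem_univ _)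
      (by rw [hf0, hf0])
  set sol : ℝ → EE n := fun t => f ⌊|t|⌋₊ t with hsol
  have habs : ∀ s : ℝ, |s| < (⌊|s|⌋₊ : ℝ) + 1 := fun s => Nat.lt_floor_add_one |s|
  have hmemI : ∀ s : ℝ, s ∈ Set.Icc (-((⌊|s|⌋₊ : ℝ)+1)) ((⌊|s|⌋₊ : ℝ)+1) := by
    intro s
    have := (habs s).le
    rw [abs_le] at this
    exact ⟨this.1, this.2⟩
  have hlocal : ∀ t : ℝ, sol =ᶠ[nhds t] f ⌊|t|⌋₊ := by
    intro t
    have hopen : IsOpen {s : ℝ | |s| < (⌊|t|⌋₊ : ℝ) + 1} :=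
      isOpen_lt continuous_abs continuous_const
    filter_upwards [hopen.mem_nhds (habs t)] with s hs
    have hsI : s ∈ Set.Icc (-((⌊|t|⌋₊ : ℝ)+1)) ((⌊|t|⌋₊ : ℝ)+1) := by
      rw [abs_lt] at hs
      exact ⟨hs.1.le, hs.2.le⟩
    rcases le_total (⌊|s|⌋₊) (⌊|t|⌋₊) with h | h
    · exact heqkm _ _ h (hmemI s)
    · exact (heqkm _ _ h hsI).symm
  have hAde : ∀ t : ℝ, HasDerivAt sol (Gv R (sol t)) t := by
    intro t
    have h1 : HasDerivAt (f ⌊|t|⌋₊) (Gv R (f ⌊|t|⌋₊ t)) t := by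
      apply hfd'
      have := habs t
      rw [abs_lt] at this
      exact ⟨this.1, this.2⟩
    have h2 : sol t = f ⌊|t|⌋₊ t := rfl
    rw [show Gv R (sol t) = Gv R (f ⌊|t|⌋₊ t) from by rw [h2]]
    exact h1.congr_of_eventuallyEq (hlocal t)
  -- monotone decrease of sqnorm
  set q : ℝ → ℝ := fun t => ∑ i, ∑ j, sol t i j * sol t i j with hq
  have hqd : ∀ t : ℝ, HasDerivAt q
      (2 * frob (Matrix.of (sol t)) (Matrix.of (Gv R (sol t)))) t := by
    intro t
    have hcomp : ∀ i j, HasDerivAt (fun s => sol s i j) (Gv R (sol t) i j) t := by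
      intro i j
      exact hasDerivAt_pi.mp (hasDerivAt_pi.mp (hAde t) i) j
    have hsum := HasDerivAt.fun_sum (fun i (_ : i ∈ Finset.univ) =>
      HasDerivAt.fun_sum (fun j (_ : j ∈ Finset.univ) => (hcomp i j).fun_mul (hcomp i j)))
    refine hsum.congr_deriv ?_
    symm
    rw [frob_eq_sum, Finset.mul_sum]
    refine Finset.sum_congr rfl fun i _ => ?_
    rw [Finset.mul_sum]
    refine Finset.sum_congr rfl fun j _ => ?_
    show 2 * (sol t i j * Gv R (sol t) i j) = _
    ring
  have hanti : Antitone q := by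
    apply antitone_of_deriv_nonpos (fun t => (hqd t).differentiableAt)
    intro t
    rw [(hqd t).deriv]
    have := frob_Gv_nonpos hR (sol t)
    linarith
  have hsol0 : sol 0 = A₀v := by
    have : (⌊|(0:ℝ)|⌋₊ : ℕ) = 0 := by norm_num
    rw [hsol]
    simp only [this, abs_zero, Nat.floor_zero]
    exact hf0 0
  have hq0 : q 0 = sqnorm A₀ := by
    rw [hq]
    simp only [hsol0]
    rw [sqnorm_eq_sum A₀]
    rfl
  -- norm control for t ≥ 0
  have hnorm : ∀ t : ℝ, 0 ≤ t → ‖sol t‖ ≤ R := by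
    intro t ht
    have hqt : q t ≤ sqnorm A₀ := hq0 ▸ hanti ht
    have hqt' : sqnorm (Matrix.of (sol t)) ≤ sqnorm A₀ := by
      rw [sqnorm_eq_sum]
      exact hqt
    have hent : ∀ i j, |sol t i j| ≤ Real.sqrt (sqnorm A₀) := by
      intro i j
      apply Real.abs_le_sqrt
      calc (sol t i j)^2 ≤ sqnorm (Matrix.of (sol t)) := by
            rw [sqnorm_eq_sum, pow_two]
            have h1 : ∀ i' ∈ Finset.univ (α := Fin n), (0:ℝ) ≤ ∑ j', sol t i' j' * sol t i' j' :=
              fun i' _ => Finset.sum_nonneg fun j' _ => mul_self_nonneg _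
            calc sol t i j * sol t i j ≤ ∑ j', sol t i j' * sol t i j' :=
                  Finset.single_le_sum (f := fun j' => sol t i j' * sol t i j')
                    (fun j' _ => mul_self_nonneg _) (Finset.mem_univ j)
              _ ≤ ∑ i', ∑ j', sol t i' j' * sol t i' j' :=
                  Finset.single_le_sum (f := fun i' => ∑ j', sol t i' j' * sol t i' j')
                    h1 (Finset.mem_univ i)
        _ ≤ sqnorm A₀ := hqt'
    have hsqR : Real.sqrt (sqnorm A₀) ≤ R := by rw [hRdef]; linarith
    rw [pi_norm_le_iff_of_nonneg hR.le]
    intro i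
    rw [pi_norm_le_iff_of_nonneg hR.le]
    intro j
    rw [Real.norm_eq_abs]
    exact le_trans (hent i j) hsqR
  -- final answer
  refine ⟨fun t => Matrix.of (sol t), ?_, ?_⟩
  · show Matrix.of (sol 0) = A₀
    rw [hsol0, hA₀v]
    simp
  · intro t ht i j
    have hG : Gv R (sol t) = Matrix.of.symm (rhs (Matrix.of (sol t))) := by
      rw [Gv, retr_eq_self hR (hnorm t ht)]
    have h1 : HasDerivAt (fun s => sol s i j) (Gv R (sol t) i j) t :=
      hasDerivAt_pi.mp (hasDerivAt_pi.mp (hAde t) i) j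
    rw [hG] at h1
    exact h1
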